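/- For x ≥ 2, ∑_{p ≤ x} (log p)/p = log x + O(1); that is, there is an absolute constant C such that |∑_{p ≤ x} (log p)/p − log x| ≤ C for all x ≥ 2. -/

import Mathlib

open Finset ArithmeticFunction



private lemma mertens_range_eq (N : ℕ) :
    (Finset.range (N+1)).filter Nat.Prime = (Finset.Ioc 0 N).filter Nat.Prime := by
  ext p
  simp only [mem_filter, mem_range, mem_Ioc, Nat.lt_succ_iff]
  constructor
  · rintro ⟨h1, h2⟩; exact ⟨⟨h2.pos, h1⟩, h2⟩
  · rintro ⟨⟨_, h1⟩, h2⟩; exact ⟨h1, h2⟩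

private lemma mertens_swap (N : ℕ) :
    ∑ n ∈ Finset.Ioc 0 N, Real.log n = ∑ d ∈ Finset.Ioc 0 N, Λ d * (N / d : ℕ) := by
  have h1 : ∀ n ∈ Finset.Ioc 0 N, Real.log n = ∑ d ∈ (Finset.Ioc 0 N).filter (· ∣ n), Λ d := by
    intro n hn
    rw [mem_Ioc] at hn
    rw [← ArithmeticFunction.vonMangoldt_sum]
    apply Finset.sum_congr _ (fun _ _ => rfl)
    ext d
    simp only [Nat.mem_divisors, mem_filter, mem_Ioc]
    constructor
    · rintro ⟨hd, hn0⟩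
      have hd0 : 0 < d := Nat.pos_of_dvd_of_pos hd hn.1
      exact ⟨⟨hd0, (Nat.le_of_dvd hn.1 hd).trans hn.2⟩, hd⟩
    · rintro ⟨_, hd⟩; exact ⟨hd, hn.1.ne'⟩
  calc ∑ n ∈ Finset.Ioc 0 N, Real.log n
      = ∑ n ∈ Finset.Ioc 0 N, ∑ d ∈ (Finset.Ioc 0 N).filter (· ∣ n), Λ d :=
        Finset.sum_congr rfl h1
    _ = ∑ n ∈ Finset.Ioc 0 N, ∑ d ∈ Finset.Ioc 0 N, if d ∣ n then Λ d else 0 := by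
        simp [Finset.sum_filter]
    _ = ∑ d ∈ Finset.Ioc 0 N, ∑ n ∈ Finset.Ioc 0 N, if d ∣ n then Λ d else 0 :=
        Finset.sum_comm
    _ = ∑ d ∈ Finset.Ioc 0 N, Λ d * (N / d : ℕ) := by
        refine Finset.sum_congr rfl fun d _ => ?_
        rw [← Finset.sum_filter, Finset.sum_const, ← Nat.Ioc_filter_dvd_card_eq_div,
          nsmul_eq_mul, mul_comm]

private lemma mertens_stirling {N : ℕ} (hN : 1 ≤ N) :
    |(∑ n ∈ Finset.Ioc 0 N, Real.log n) - N * Real.log N| ≤ N := by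
  have hN0 : (0:ℝ) < N := by exact_mod_cast hN
  have hupper : ∑ n ∈ Finset.Ioc 0 N, Real.log n ≤ N * Real.log N := by
    calc ∑ n ∈ Finset.Ioc 0 N, Real.log n ≤ ∑ n ∈ Finset.Ioc 0 N, Real.log N := by
          apply Finset.sum_le_sum
          intro n hn
          rw [mem_Ioc] at hn
          exact Real.log_le_log (by exact_mod_cast hn.1) (by exact_mod_cast hn.2)
      _ = N * Real.log N := by rw [Finset.sum_const, Nat.card_Ioc, nsmul_eq_mul]; simp
  have hfac : (∏ n ∈ Finset.Ioc 0 N, (n:ℝ)) = (Nat.factorial N : ℝ) := by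
    rw [← Nat.cast_prod]
    congr 1
    rw [show Finset.Ioc 0 N = Finset.Ico 1 (N+1) by ext x; simp [Nat.lt_succ_iff]; omega]
    exact Finset.prod_Ico_id_eq_factorial N
  have hlow : (N:ℝ) * Real.log N - N ≤ ∑ n ∈ Finset.Ioc 0 N, Real.log n := by
    have h1 : (N:ℝ) ^ N / Nat.factorial N ≤ Real.exp N :=
      Real.pow_div_factorial_le_exp (x := (N:ℝ)) (le_of_lt hN0) N
    have hfacpos : (0:ℝ) < Nat.factorial N := by exact_mod_cast N.factorial_pos
    have h2 : (N:ℝ) ^ N ≤ Nat.factorial N * Real.exp N := by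
      rw [div_le_iff₀ hfacpos] at h1; linarith [h1]
    have h3 : Real.log ((N:ℝ) ^ N) ≤ Real.log ((Nat.factorial N : ℝ) * Real.exp N) :=
      Real.log_le_log (by positivity) h2
    rw [Real.log_pow, Real.log_mul (ne_of_gt hfacpos) (Real.exp_ne_zero _),
      Real.log_exp] at h3
    have h4 : Real.log (Nat.factorial N : ℝ) = ∑ n ∈ Finset.Ioc 0 N, Real.log n := by
      rw [← hfac, Real.log_prod]
      intro n hn
      rw [mem_Ioc] at hn
      exact_mod_cast hn.1.ne'
    rw [h4] at h3
    linarith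
  rw [abs_le]
  constructor <;> linarith

private lemma mertens_theta {N : ℕ} :
    ∑ p ∈ (Finset.Ioc 0 N).filter Nat.Prime, Real.log p ≤ N * Real.log 4 := by
  rw [← mertens_range_eq N]
  have h1 : ∑ p ∈ (Finset.range (N+1)).filter Nat.Prime, Real.log p
      = Real.log ((primorial N : ℕ) : ℝ) := by
    rw [primorial, Nat.cast_prod, Real.log_prod]
    intro p hp
    rw [mem_filter] at hp
    exact_mod_cast hp.2.pos.ne'
  rw [h1]
  have h2 : Real.log ((primorial N : ℕ) : ℝ) ≤ Real.log ((4:ℝ) ^ N) := by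
    apply Real.log_le_log (by exact_mod_cast primorial_pos N)
    exact_mod_cast primorial_le_4_pow N
  rwa [Real.log_pow] at h2



noncomputable def mertensC2 : ℝ := 4 * ∑' n : ℕ, 1 / (n:ℝ) ^ (3/2 : ℝ)

private lemma mertens_geom {r : ℝ} (h0 : 0 ≤ r) (h2 : r ≤ 1/2) (N : ℕ) :
    ∑ k ∈ Finset.Icc 2 N, r ^ k ≤ 2 * r ^ 2 := by
  have h1 : r ≠ 1 := by linarith
  have hgeo : ∀ n : ℕ, ∑ i ∈ Finset.range n, r ^ i ≤ 2 := by
    intro n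
    rw [geom_sum_eq h1]
    have hrn : 0 ≤ r ^ n := by positivity
    rw [div_le_iff_of_neg (by linarith : r - 1 < 0)]
    nlinarith
  calc ∑ k ∈ Finset.Icc 2 N, r ^ k = ∑ k ∈ Finset.Ico 2 (N+1), r ^ k := by
        rw [← Finset.Ico_add_one_right_eq_Icc]
    _ = ∑ i ∈ Finset.range (N+1-2), r ^ (2+i) := by rw [Finset.sum_Ico_eq_sum_range]
    _ = r ^ 2 * ∑ i ∈ Finset.range (N+1-2), r ^ i := by
        rw [Finset.mul_sum]
        exact Finset.sum_congr rfl fun i _ => by rw [pow_add]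
    _ ≤ r ^ 2 * 2 := by
        apply mul_le_mul_of_nonneg_left (hgeo _) (by positivity)
    _ = 2 * r ^ 2 := by ring

private lemma mertens_log_le {n : ℕ} (hn : 0 < n) : Real.log n ≤ 2 * Real.sqrt n := by
  have h1 : (0:ℝ) < n := by exact_mod_cast hn
  have h2 : Real.log (Real.sqrt n) ≤ Real.sqrt n - 1 :=
    Real.log_le_sub_one_of_pos (Real.sqrt_pos.2 h1)
  rw [Real.log_sqrt (le_of_lt h1)] at h2
  linarith

private lemma mertens_sqrt_div {n : ℕ} (hn : 0 < n) :
    Real.sqrt n / (n:ℝ) ^ 2 = 1 / (n:ℝ) ^ (3/2 : ℝ) := by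
  have h1 : (0:ℝ) < n := by exact_mod_cast hn
  rw [Real.sqrt_eq_rpow, div_eq_div_iff (by positivity) (by positivity), one_mul,
    ← Real.rpow_natCast (n:ℝ) 2, ← Real.rpow_add h1]
  norm_num

-- tail sum bound
private lemma mertens_tail {N : ℕ} :
    ∑ d ∈ (Finset.Ioc 0 N).filter (fun d => ¬ d.Prime), Λ d / d ≤ mertensC2 := by
  classical
  set s' := ((Finset.Ioc 0 N).filter (fun d => ¬ d.Prime)).filter IsPrimePow with hs'
  have hstep1 : ∑ d ∈ (Finset.Ioc 0 N).filter (fun d => ¬ d.Prime), Λ d / d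
      = ∑ d ∈ s', Λ d / d := by
    refine (Finset.sum_subset (Finset.filter_subset _ _) ?_).symm
    intro d hd hd2
    have : ¬ IsPrimePow d := by
      intro h
      exact hd2 (Finset.mem_filter.2 ⟨hd, h⟩)
    rw [ArithmeticFunction.vonMangoldt_eq_zero_iff.2 this, zero_div]
  set B := ((Finset.Ioc 0 N).filter Nat.Prime) ×ˢ Finset.Icc 2 N with hB
  have hinj : Set.InjOn (fun q : ℕ × ℕ => q.1 ^ q.2) B := by
    rintro ⟨p, k⟩ hp ⟨q, j⟩ hq h
    simp only [Finset.mem_coe, hB, Finset.mem_product, Finset.mem_filter, Finset.mem_Ioc,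
      Finset.mem_Icc] at hp hq
    simp only at h
    have hpp : p.Prime := hp.1.2
    have hqp : q.Prime := hq.1.2
    have hpq : p = q := by
      have hd : p ∣ q ^ j := h ▸ dvd_pow_self p (by have := hp.2.1; omega : k ≠ 0)
      have := hpp.dvd_of_dvd_pow hd
      exact ((Nat.prime_dvd_prime_iff_eq hpp hqp).1 this)
    subst hpq
    have : k = j := Nat.pow_right_injective hpp.two_le h
    simp [this]
  have hsub : s' ⊆ B.image (fun q : ℕ × ℕ => q.1 ^ q.2) := by
    intro d hd
    simp only [hs', Finset.mem_filter, Finset.mem_Ioc] at hd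
    obtain ⟨⟨⟨hd0, hdN⟩, hdnp⟩, hdpp⟩ := hd
    obtain ⟨p, k, hp, hk, rfl⟩ := (isPrimePow_nat_iff _).1 hdpp
    have hk2 : 2 ≤ k := by
      rcases k with _ | k0
      · omega
      rcases k0 with _ | k1
      · rw [pow_one] at hdnp; exact absurd hp hdnp
      · omega
    have hpN : p ≤ N := le_trans (Nat.le_self_pow (by omega) p) hdN
    have hkN : k ≤ N := by
      have h1 : k < 2 ^ k := Nat.lt_two_pow_self
      have h2 : 2 ^ k ≤ p ^ k := Nat.pow_le_pow_left hp.two_le k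
      omega
    apply Finset.mem_image.2
    exact ⟨⟨p, k⟩, by simp [hB, Finset.mem_product, Finset.mem_filter, Finset.mem_Ioc,
      hp, hp.pos, hpN, hk2, hkN], rfl⟩
  have hstep2 : ∑ d ∈ s', Λ d / d
      ≤ ∑ q ∈ B, Real.log q.1 / (q.1:ℝ) ^ q.2 := by
    calc ∑ d ∈ s', Λ d / d
        ≤ ∑ d ∈ B.image (fun q : ℕ × ℕ => q.1 ^ q.2), Λ d / d := by
          apply Finset.sum_le_sum_of_subset_of_nonneg hsub
          intro d _ _
          exact div_nonneg ArithmeticFunction.vonMangoldt_nonneg (Nat.cast_nonneg d)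
      _ = ∑ q ∈ B, Λ (q.1 ^ q.2) / ((q.1:ℝ) ^ q.2) := by
          rw [Finset.sum_image (fun a ha b hb => hinj ha hb)]
          push_cast
          rfl
      _ = ∑ q ∈ B, Real.log q.1 / (q.1:ℝ) ^ q.2 := by
          apply Finset.sum_congr rfl
          rintro ⟨p, k⟩ hq
          simp only [hB, Finset.mem_product, Finset.mem_filter, Finset.mem_Icc] at hq
          rw [ArithmeticFunction.vonMangoldt_apply_pow (by omega : k ≠ 0),
            ArithmeticFunction.vonMangoldt_apply_prime hq.1.2]
  have hstep3 : ∑ q ∈ B, Real.log q.1 / (q.1:ℝ) ^ q.2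
      ≤ ∑ p ∈ (Finset.Ioc 0 N).filter Nat.Prime, 2 * Real.log p / (p:ℝ) ^ 2 := by
    rw [hB, Finset.sum_product]
    apply Finset.sum_le_sum
    intro p hp
    rw [Finset.mem_filter] at hp
    have hp2 : (2:ℝ) ≤ p := by exact_mod_cast hp.2.two_le
    have hlogp : 0 ≤ Real.log p := Real.log_nonneg (by linarith)
    have hinner : ∑ k ∈ Finset.Icc 2 N, Real.log p / (p:ℝ) ^ k
        = Real.log p * ∑ k ∈ Finset.Icc 2 N, (1 / (p:ℝ)) ^ k := by
      rw [Finset.mul_sum]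
      apply Finset.sum_congr rfl
      intro k _
      rw [div_pow, one_pow]
      ring
    rw [hinner]
    have hgeom := mertens_geom (r := 1/(p:ℝ)) (by positivity) (by
      rw [div_le_div_iff₀ (by linarith) (by norm_num)]; linarith) N
    calc Real.log p * ∑ k ∈ Finset.Icc 2 N, (1 / (p:ℝ)) ^ k
        ≤ Real.log p * (2 * (1 / (p:ℝ)) ^ 2) := mul_le_mul_of_nonneg_left hgeom hlogp
      _ = 2 * Real.log p / (p:ℝ) ^ 2 := by
          rw [div_pow, one_pow]
          field_simp
  have hstep4 : ∑ p ∈ (Finset.Ioc 0 N).filter Nat.Prime, 2 * Real.log p / (p:ℝ) ^ 2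
      ≤ ∑ n ∈ Finset.Ioc 0 N, 2 * Real.log n / (n:ℝ) ^ 2 := by
    apply Finset.sum_le_sum_of_subset_of_nonneg (Finset.filter_subset _ _)
    intro n hn _
    rw [Finset.mem_Ioc] at hn
    have h1 : (1:ℝ) ≤ n := by exact_mod_cast hn.1
    have := Real.log_nonneg h1
    positivity
  have hstep5 : ∑ n ∈ Finset.Ioc 0 N, 2 * Real.log n / (n:ℝ) ^ 2 ≤ mertensC2 := by
    have hsummable : Summable (fun n : ℕ => 1 / (n:ℝ) ^ (3/2 : ℝ)) :=
      Real.summable_one_div_nat_rpow.2 (by norm_num)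
    calc ∑ n ∈ Finset.Ioc 0 N, 2 * Real.log n / (n:ℝ) ^ 2
        ≤ ∑ n ∈ Finset.Ioc 0 N, 4 * (1 / (n:ℝ) ^ (3/2 : ℝ)) := by
          apply Finset.sum_le_sum
          intro n hn
          rw [Finset.mem_Ioc] at hn
          have hn0 : (0:ℝ) < n := by exact_mod_cast hn.1
          have hlog := mertens_log_le hn.1
          have hsq := mertens_sqrt_div hn.1
          calc 2 * Real.log n / (n:ℝ) ^ 2 ≤ 2 * (2 * Real.sqrt n) / (n:ℝ) ^ 2 := by
                apply div_le_div_of_nonneg_right _ (by positivity)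
                · linarith
            _ = 4 * (Real.sqrt n / (n:ℝ) ^ 2) := by ring
            _ = 4 * (1 / (n:ℝ) ^ (3/2 : ℝ)) := by rw [hsq]
      _ = 4 * ∑ n ∈ Finset.Ioc 0 N, 1 / (n:ℝ) ^ (3/2 : ℝ) := by rw [Finset.mul_sum]
      _ ≤ mertensC2 := by
          rw [mertensC2]
          apply mul_le_mul_of_nonneg_left _ (by norm_num)
          apply Summable.sum_le_tsum _ _ hsummable
          intro n _
          positivity
  linarith [hstep1, hstep2, hstep3, hstep4, hstep5]

private lemma mertens_main {N : ℕ} (hN : 1 ≤ N) :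
    |(∑ p ∈ (Finset.Ioc 0 N).filter Nat.Prime, Real.log p / p) - Real.log N|
      ≤ 1 + Real.log 4 + mertensC2 := by
  classical
  have hN0 : (0:ℝ) < N := by exact_mod_cast hN
  set T := ∑ p ∈ (Finset.Ioc 0 N).filter Nat.Prime, Real.log p / p with hT
  set S := ∑ n ∈ Finset.Ioc 0 N, Real.log n with hS
  set A := ∑ p ∈ (Finset.Ioc 0 N).filter Nat.Prime, Real.log p * ((N / p : ℕ) : ℝ) with hA
  set R := ∑ d ∈ (Finset.Ioc 0 N).filter (fun d => ¬ d.Prime), Λ d * ((N / d : ℕ) : ℝ) with hR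
  have hsplit : S = A + R := by
    rw [hS, mertens_swap N, ← Finset.sum_filter_add_sum_filter_not (Finset.Ioc 0 N) Nat.Prime]
    congr 1
    apply Finset.sum_congr rfl
    intro p hp
    rw [Finset.mem_filter] at hp
    rw [ArithmeticFunction.vonMangoldt_apply_prime hp.2]
  have hRnonneg : 0 ≤ R := by
    apply Finset.sum_nonneg
    intro d _
    exact mul_nonneg ArithmeticFunction.vonMangoldt_nonneg (Nat.cast_nonneg _)
  have hRle : R ≤ N * mertensC2 := by
    calc R ≤ ∑ d ∈ (Finset.Ioc 0 N).filter (fun d => ¬ d.Prime), (N:ℝ) * (Λ d / d) := by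
          apply Finset.sum_le_sum
          intro d hd
          rw [Finset.mem_filter, Finset.mem_Ioc] at hd
          have hd0 : (0:ℝ) < d := by exact_mod_cast hd.1.1
          have h1 : ((N / d : ℕ) : ℝ) ≤ (N:ℝ) / d := Nat.cast_div_le
          calc Λ d * ((N / d : ℕ) : ℝ) ≤ Λ d * ((N:ℝ) / d) :=
                mul_le_mul_of_nonneg_left h1 ArithmeticFunction.vonMangoldt_nonneg
            _ = (N:ℝ) * (Λ d / d) := by field_simp
      _ = (N:ℝ) * ∑ d ∈ (Finset.Ioc 0 N).filter (fun d => ¬ d.Prime), Λ d / d := by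
          rw [Finset.mul_sum]
      _ ≤ N * mertensC2 := mul_le_mul_of_nonneg_left mertens_tail (le_of_lt hN0)
  have hE : 0 ≤ (N:ℝ) * T - A ∧ (N:ℝ) * T - A ≤ N * Real.log 4 := by
    have hdiff : (N:ℝ) * T - A
        = ∑ p ∈ (Finset.Ioc 0 N).filter Nat.Prime,
            Real.log p * ((N:ℝ)/p - ((N / p : ℕ) : ℝ)) := by
      rw [hT, hA, Finset.mul_sum, ← Finset.sum_sub_distrib]
      apply Finset.sum_congr rfl
      intro p hp
      rw [Finset.mem_filter, Finset.mem_Ioc] at hp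
      have hp0 : (0:ℝ) < p := by exact_mod_cast hp.1.1
      field_simp
    constructor
    · rw [hdiff]
      apply Finset.sum_nonneg
      intro p hp
      rw [Finset.mem_filter, Finset.mem_Ioc] at hp
      have hp1 : (1:ℝ) ≤ p := by exact_mod_cast hp.1.1
      have h1 : ((N / p : ℕ) : ℝ) ≤ (N:ℝ) / p := Nat.cast_div_le
      exact mul_nonneg (Real.log_nonneg hp1) (by linarith)
    · rw [hdiff]
      calc ∑ p ∈ (Finset.Ioc 0 N).filter Nat.Prime,
              Real.log p * ((N:ℝ)/p - ((N / p : ℕ) : ℝ))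
          ≤ ∑ p ∈ (Finset.Ioc 0 N).filter Nat.Prime, Real.log p := by
            apply Finset.sum_le_sum
            intro p hp
            rw [Finset.mem_filter, Finset.mem_Ioc] at hp
            have hp0 : (0:ℝ) < p := by exact_mod_cast hp.1.1
            have hp1 : (1:ℝ) ≤ p := by exact_mod_cast hp.1.1
            have h2 : (N:ℝ) < (((N / p : ℕ) : ℝ) + 1) * p := by
              have := (Nat.div_lt_iff_lt_mul hp.1.1).1 (Nat.lt_succ_self (N / p))
              exact_mod_cast this
            have h3 : (N:ℝ)/p - ((N / p : ℕ) : ℝ) ≤ 1 := by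
              rw [div_sub' (ne_of_gt hp0), div_le_one hp0]
              nlinarith
            nlinarith [Real.log_nonneg hp1]
        _ ≤ N * Real.log 4 := mertens_theta
  have hstir := mertens_stirling hN
  rw [← hS] at hstir
  have key : |(N:ℝ) * T - N * Real.log N| ≤ N * (1 + Real.log 4 + mertensC2) := by
    have h1 : (N:ℝ) * T - N * Real.log N = (S - N * Real.log N) - R + ((N:ℝ) * T - A) := by
      rw [hsplit]; ring
    rw [abs_le] at hstir ⊢
    constructor
    · rw [h1]; nlinarith [hE.1, hE.2, hRle, hRnonneg, hstir.1, hstir.2]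
    · rw [h1]; nlinarith [hE.1, hE.2, hRle, hRnonneg, hstir.1, hstir.2]
  have : |T - Real.log N| * N ≤ (1 + Real.log 4 + mertensC2) * N := by
    calc |T - Real.log N| * N = |(T - Real.log N) * N| := by
          rw [abs_mul, abs_of_pos hN0]
      _ = |(N:ℝ) * T - N * Real.log N| := by ring_nf
      _ ≤ N * (1 + Real.log 4 + mertensC2) := key
      _ = (1 + Real.log 4 + mertensC2) * N := by ring
  exact le_of_mul_le_mul_right this hN0

theorem stmt_7 :
    ∃ C : ℝ, ∀ x : ℝ, 2 ≤ x →
      |(∑ p ∈ (Finset.range (⌊x⌋₊ + 1)).filter Nat.Prime, Real.log p / p) - Real.log x| ≤ C := by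
  refine ⟨1 + Real.log 4 + mertensC2 + Real.log 2, fun x hx => ?_⟩
  set N := ⌊x⌋₊ with hNdef
  have hN2 : 2 ≤ N := Nat.le_floor (by exact_mod_cast hx)
  have hN1 : 1 ≤ N := le_trans (by norm_num) hN2
  have hN0 : (0:ℝ) < N := by exact_mod_cast hN1
  have hxpos : (0:ℝ) < x := by linarith
  have hfloor_le : (N:ℝ) ≤ x := Nat.floor_le (le_of_lt hxpos)
  have hlt : x < N + 1 := Nat.lt_floor_add_one x
  have hx2N : x ≤ 2 * N := by
    have : (N:ℝ) + 1 ≤ 2 * N := by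
      have : (1:ℝ) ≤ N := by exact_mod_cast hN1
      linarith
    linarith
  have hlog1 : Real.log N ≤ Real.log x := Real.log_le_log hN0 hfloor_le
  have hlog2 : Real.log x ≤ Real.log 2 + Real.log N := by
    calc Real.log x ≤ Real.log (2 * N) := Real.log_le_log hxpos hx2N
      _ = Real.log 2 + Real.log N := Real.log_mul (by norm_num) (ne_of_gt hN0)
  have hmain := mertens_main hN1
  rw [mertens_range_eq N] at *
  set T := ∑ p ∈ (Finset.Ioc 0 N).filter Nat.Prime, Real.log p / p with hT
  rw [abs_le] at hmain ⊢
  constructor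
  · nlinarith [hmain.1]
  · nlinarith [hmain.2]
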